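/- arXiv:2305.01709 — 2 statements merged into one kernel-verified Lean document; each statement's English description precedes it below -/
import Mathlib

section
/- Let Y be a {0,1}-valued random variable on a probability space with S a real-valued random variable, let m denote a version of the conditional expectation E[Y | σ(S)], let μ = E[Y], and let g, h : ℝ → ℝ be bounded measurable functions. Then Var[ g(S)(Y − μ) + h(S) ] − Var[ g(S)(Y − m) ] = Var[ g(S)(m − μ) + h(S) ], which is nonnegative; in particular Var[ g(S)(Y − μ) + h(S) ] ≥ Var[ g(S)(Y − m) ]. -/
open MeasureTheory ProbabilityTheory

private theorem var_congr {Ω : Type*} [MeasurableSpace Ω] {μ : Measure Ω} {f g : Ω → ℝ}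
    (h : f =ᵐ[μ] g) : variance f μ = variance g μ := by
  have hi : ∫ x, f x ∂μ = ∫ x, g x ∂μ := integral_congr_ae h
  simp only [variance, evariance]
  congr 1
  apply lintegral_congr_ae
  filter_upwards [h] with ω hω
  rw [hω, hi]

/-- **Corollary 1 (efficiency gain of ssROC over supROC)**: for a binary label `Y`,
score `S`, a version `m` of `E[Y | σ(S)]`, `μY = E[Y]`, and bounded measurable
`g, h`, `Var[g(S)(Y − μY) + h(S)] − Var[g(S)(Y − m)] = Var[g(S)(m − μY) + h(S)] ≥ 0`;
in particular `Var[g(S)(Y − μY) + h(S)] ≥ Var[g(S)(Y − m)]`. -/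
theorem stmt_2 {Ω : Type*} [MeasurableSpace Ω] (μ : Measure Ω) [IsProbabilityMeasure μ]
    (Y S : Ω → ℝ) (hY : Measurable Y) (hS : Measurable S)
    (hY01 : ∀ ω, Y ω = 0 ∨ Y ω = 1)
    (m : Ω → ℝ)
    (hm : m =ᵐ[μ] μ[Y | MeasurableSpace.comap S inferInstance])
    (g h : ℝ → ℝ) (hg : Measurable g) (hh : Measurable h)
    (Cg Ch : ℝ) (hgb : ∀ x, |g x| ≤ Cg) (hhb : ∀ x, |h x| ≤ Ch) :
    (variance (fun ω => g (S ω) * (Y ω - ∫ x, Y x ∂μ) + h (S ω)) μ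
        - variance (fun ω => g (S ω) * (Y ω - m ω)) μ
      = variance (fun ω => g (S ω) * (m ω - ∫ x, Y x ∂μ) + h (S ω)) μ)
    ∧ 0 ≤ variance (fun ω => g (S ω) * (m ω - ∫ x, Y x ∂μ) + h (S ω)) μ
    ∧ variance (fun ω => g (S ω) * (Y ω - m ω)) μ
        ≤ variance (fun ω => g (S ω) * (Y ω - ∫ x, Y x ∂μ) + h (S ω)) μ := by
  have h𝒮 := measurable_iff_comap_le.mp hS
  haveI : SigmaFinite (μ.trim h𝒮) := by infer_instance
  set μY : ℝ := ∫ x, Y x ∂μ with hμYdef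
  set m' : Ω → ℝ := μ[Y | MeasurableSpace.comap S inferInstance] with hm'def
  have hSm : Measurable[MeasurableSpace.comap S inferInstance] S :=
    measurable_iff_comap_le.mpr le_rfl
  have F1sm : StronglyMeasurable[MeasurableSpace.comap S inferInstance] (fun ω => g (S ω)) :=
    (hg.comp hSm).stronglyMeasurable
  have hhsm : StronglyMeasurable[MeasurableSpace.comap S inferInstance] (fun ω => h (S ω)) :=
    (hh.comp hSm).stronglyMeasurable
  have hm'sm : StronglyMeasurable[MeasurableSpace.comap S inferInstance] m' :=
    stronglyMeasurable_condExp
  -- bounds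
  have hYb : ∀ ω, ‖Y ω‖ ≤ 1 := by
    intro ω; rcases hY01 ω with h1 | h1 <;> simp [h1]
  have intY : Integrable Y μ :=
    (MemLp.of_bound hY.aestronglyMeasurable 1 (Filter.Eventually.of_forall hYb)).integrable
      le_rfl
  have hμYb : ‖μY‖ ≤ 1 := by
    rw [hμYdef]
    calc ‖∫ x, Y x ∂μ‖ ≤ 1 * (μ Set.univ).toReal :=
          norm_integral_le_of_norm_le_const (Filter.Eventually.of_forall hYb)
      _ = 1 := by simp
  have hm'0 : 0 ≤ᵐ[μ] m' := condExp_nonneg (Filter.Eventually.of_forall fun ω => by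
    rcases hY01 ω with h1 | h1 <;> simp [h1])
  have hm'1 : m' ≤ᵐ[μ] fun _ => (1 : ℝ) := by
    have h2 : μ[Y | MeasurableSpace.comap S inferInstance] ≤ᵐ[μ] μ[(fun _ => (1 : ℝ)) | MeasurableSpace.comap S inferInstance] :=
      condExp_mono intY (integrable_const 1) (Filter.Eventually.of_forall fun ω => by
        rcases hY01 ω with h1 | h1 <;> simp [h1])
    rw [condExp_const h𝒮 (1 : ℝ)] at h2
    exact h2
  have hm'b : ∀ᵐ ω ∂μ, ‖m' ω‖ ≤ 1 := by
    filter_upwards [hm'0, hm'1] with ω h0 h1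
    rw [Real.norm_eq_abs, abs_le]
    have h0' : (0:ℝ) ≤ m' ω := h0
    exact ⟨by linarith, h1⟩
  have hCg0 : 0 ≤ Cg := le_trans (abs_nonneg _) (hgb 0)
  have hCh0 : 0 ≤ Ch := le_trans (abs_nonneg _) (hhb 0)
  have intm' : Integrable m' μ := integrable_condExp
  -- key lemma: for bounded 𝒮-measurable F, ∫ F·Y = ∫ F·m'
  have key : ∀ (F : Ω → ℝ), StronglyMeasurable[MeasurableSpace.comap S inferInstance] F → ∀ C : ℝ,
      (∀ᵐ ω ∂μ, ‖F ω‖ ≤ C) → ∫ ω, F ω * Y ω ∂μ = ∫ ω, F ω * m' ω ∂μ := by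
    intro F hF C hb
    have h1 : μ[F * Y | MeasurableSpace.comap S inferInstance] =ᵐ[μ] F * μ[Y | MeasurableSpace.comap S inferInstance] :=
      condExp_stronglyMeasurable_mul_of_bound h𝒮 hF intY C hb
    calc ∫ ω, F ω * Y ω ∂μ = ∫ ω, (F * Y) ω ∂μ := rfl
      _ = ∫ ω, (μ[F * Y | MeasurableSpace.comap S inferInstance]) ω ∂μ := (integral_condExp h𝒮).symm
      _ = ∫ ω, (F * μ[Y | MeasurableSpace.comap S inferInstance]) ω ∂μ := integral_congr_ae h1
      _ = ∫ ω, F ω * m' ω ∂μ := rfl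
  -- the two parts
  set U : Ω → ℝ := fun ω => g (S ω) * (Y ω - m' ω) with hUdef
  set V : Ω → ℝ := fun ω => g (S ω) * (m' ω - μY) + h (S ω) with hVdef
  have hUsm : AEStronglyMeasurable U μ :=
    ((F1sm.mono h𝒮).aestronglyMeasurable.mul
      (hY.aestronglyMeasurable.sub (hm'sm.mono h𝒮).aestronglyMeasurable))
  have hVsm : AEStronglyMeasurable V μ :=
    (((F1sm.mul (hm'sm.sub stronglyMeasurable_const)).add hhsm).mono h𝒮).aestronglyMeasurable
  have hUb : ∀ᵐ ω ∂μ, ‖U ω‖ ≤ Cg * 2 := by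
    filter_upwards [hm'b] with ω hb
    calc ‖U ω‖ = |g (S ω)| * |Y ω - m' ω| := by
          rw [hUdef]; simp [Real.norm_eq_abs, abs_mul]
      _ ≤ Cg * 2 := by
          apply mul_le_mul (hgb _) _ (abs_nonneg _) hCg0
          have := hYb ω
          rw [Real.norm_eq_abs] at this hb
          calc |Y ω - m' ω| ≤ |Y ω| + |m' ω| := abs_sub _ _
            _ ≤ 2 := by linarith
  have hVb : ∀ᵐ ω ∂μ, ‖V ω‖ ≤ Cg * 2 + Ch := by
    filter_upwards [hm'b] with ω hb
    rw [Real.norm_eq_abs] at hb ⊢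
    calc |V ω| ≤ |g (S ω) * (m' ω - μY)| + |h (S ω)| := abs_add_le _ _
      _ ≤ Cg * 2 + Ch := by
          apply add_le_add _ (hhb _)
          rw [abs_mul]
          apply mul_le_mul (hgb _) _ (abs_nonneg _) hCg0
          rw [Real.norm_eq_abs] at hμYb
          calc |m' ω - μY| ≤ |m' ω| + |μY| := abs_sub _ _
            _ ≤ 2 := by linarith
  have hU2 : MemLp U 2 μ := MemLp.of_bound hUsm _ hUb
  have hV2 : MemLp V 2 μ := MemLp.of_bound hVsm _ hVb
  have hA2 : MemLp (fun ω => U ω + V ω) 2 μ := hU2.add hV2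
  have intU : Integrable U μ := hU2.integrable one_le_two
  have intV : Integrable V μ := hV2.integrable one_le_two
  have intU2 : Integrable (fun ω => U ω ^ 2) μ := hU2.integrable_sq
  have intV2 : Integrable (fun ω => V ω ^ 2) μ := hV2.integrable_sq
  have intUV : Integrable (fun ω => U ω * V ω) μ := by
    have := (hU2.add hV2).integrable_sq
    apply Integrable.mono' ((intU2.add intV2).const_mul (1/2 : ℝ))
      (hUsm.mul hVsm)
    apply Filter.Eventually.of_forall
    intro ω
    simp only [Pi.mul_apply, Real.norm_eq_abs, Pi.add_apply]
    rw [abs_mul]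
    calc |U ω| * |V ω| ≤ 1/2 * (|U ω| ^ 2 + |V ω| ^ 2) := by
          nlinarith [sq_nonneg (|U ω| - |V ω|)]
      _ = 1/2 * (U ω ^ 2 + V ω ^ 2) := by rw [sq_abs, sq_abs]
  -- E[U] = 0
  have EU : ∫ ω, U ω ∂μ = 0 := by
    have hkey := key (fun ω => g (S ω)) F1sm Cg
      (Filter.Eventually.of_forall fun ω => by simpa [Real.norm_eq_abs] using hgb (S ω))
    have intgY : Integrable (fun ω => g (S ω) * Y ω) μ := by
      apply Integrable.mono' (integrable_const (Cg * 1))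
        ((F1sm.mono h𝒮).aestronglyMeasurable.mul hY.aestronglyMeasurable)
      apply Filter.Eventually.of_forall
      intro ω
      simp only [Pi.mul_apply, norm_mul]
      exact mul_le_mul (by simpa [Real.norm_eq_abs] using hgb (S ω)) (hYb ω) (norm_nonneg _) hCg0
    have intgm' : Integrable (fun ω => g (S ω) * m' ω) μ := by
      apply Integrable.mono' (integrable_const (Cg * 1))
        ((F1sm.mono h𝒮).aestronglyMeasurable.mul (hm'sm.mono h𝒮).aestronglyMeasurable)
      filter_upwards [hm'b] with ω hb
      simp only [Pi.mul_apply, norm_mul]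
      exact mul_le_mul (by simpa [Real.norm_eq_abs] using hgb (S ω)) hb (norm_nonneg _) hCg0
    have : ∫ ω, U ω ∂μ = (∫ ω, g (S ω) * Y ω ∂μ) - ∫ ω, g (S ω) * m' ω ∂μ := by
      rw [← integral_sub intgY intgm']
      apply integral_congr_ae
      apply Filter.Eventually.of_forall
      intro ω
      simp only [hUdef]; ring
    rw [this, hkey, sub_self]
  -- E[U·V] = 0
  have EUV : ∫ ω, U ω * V ω ∂μ = 0 := by
    set F2 : Ω → ℝ := fun ω => (g (S ω) * (m' ω - μY) + h (S ω)) * g (S ω) with hF2def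
    have hF2sm : StronglyMeasurable[MeasurableSpace.comap S inferInstance] F2 :=
      ((F1sm.mul (hm'sm.sub stronglyMeasurable_const)).add hhsm).mul F1sm
    have hF2b : ∀ᵐ ω ∂μ, ‖F2 ω‖ ≤ (Cg * 2 + Ch) * Cg := by
      filter_upwards [hVb] with ω hb
      rw [hF2def]
      simp only [norm_mul]
      exact mul_le_mul hb (by simpa [Real.norm_eq_abs] using hgb (S ω)) (norm_nonneg _)
        (by positivity)
    have hkey := key F2 hF2sm _ hF2b
    have intF2Y : Integrable (fun ω => F2 ω * Y ω) μ := by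
      apply Integrable.mono' (integrable_const ((Cg * 2 + Ch) * Cg * 1))
        (((hF2sm.mono h𝒮).aestronglyMeasurable).mul hY.aestronglyMeasurable)
      filter_upwards [hF2b] with ω hb
      simp only [Pi.mul_apply, norm_mul]
      exact mul_le_mul hb (hYb ω) (norm_nonneg _) (by positivity)
    have intF2m' : Integrable (fun ω => F2 ω * m' ω) μ := by
      apply Integrable.mono' (integrable_const ((Cg * 2 + Ch) * Cg * 1))
        (((hF2sm.mono h𝒮).aestronglyMeasurable).mul (hm'sm.mono h𝒮).aestronglyMeasurable)
      filter_upwards [hF2b, hm'b] with ω hb hb'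
      simp only [Pi.mul_apply, norm_mul]
      exact mul_le_mul hb hb' (norm_nonneg _) (by positivity)
    have : ∫ ω, U ω * V ω ∂μ = (∫ ω, F2 ω * Y ω ∂μ) - ∫ ω, F2 ω * m' ω ∂μ := by
      rw [← integral_sub intF2Y intF2m']
      apply integral_congr_ae
      apply Filter.Eventually.of_forall
      intro ω
      simp only [hUdef, hVdef, hF2def]; ring
    rw [this, hkey, sub_self]
  -- variance computations
  have hVarU : variance U μ = ∫ ω, U ω ^ 2 ∂μ := by
    rw [variance_eq_sub hU2, EU]
    simp
  have hVarV : variance V μ = (∫ ω, V ω ^ 2 ∂μ) - (∫ ω, V ω ∂μ) ^ 2 := by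
    rw [variance_eq_sub hV2]
    rfl
  have hVarA : variance (fun ω => U ω + V ω) μ
      = (∫ ω, U ω ^ 2 ∂μ) + (∫ ω, V ω ^ 2 ∂μ) - (∫ ω, V ω ∂μ) ^ 2 := by
    rw [variance_eq_sub hA2]
    have h1 : ∫ ω, ((fun ω => U ω + V ω) ^ 2) ω ∂μ
        = (∫ ω, U ω ^ 2 ∂μ) + (2 * ∫ ω, U ω * V ω ∂μ) + ∫ ω, V ω ^ 2 ∂μ := by
      have heq : (fun ω => ((fun ω => U ω + V ω) ^ 2) ω)
          = fun ω => U ω ^ 2 + (2 * (U ω * V ω) + V ω ^ 2) := by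
        funext ω; simp [Pi.pow_apply]; ring
      have hi1 : Integrable (fun ω => 2 * (U ω * V ω)) μ := intUV.const_mul 2
      have hi2 : Integrable (fun ω => 2 * (U ω * V ω) + V ω ^ 2) μ := hi1.add intV2
      rw [heq, integral_add intU2 hi2, integral_add hi1 intV2, integral_const_mul]
      ring
    have h2 : ∫ ω, (fun ω => U ω + V ω) ω ∂μ = ∫ ω, V ω ∂μ := by
      simp only
      rw [integral_add intU intV, EU, zero_add]
    rw [h1, h2, EUV]
    ring
  -- a.e. rewriting to the statement's functions
  have hUm : (fun ω => g (S ω) * (Y ω - m ω)) =ᵐ[μ] U := by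
    filter_upwards [hm] with ω hω
    rw [hUdef]; simp only; rw [hω]
  have hVm : (fun ω => g (S ω) * (m ω - μY) + h (S ω)) =ᵐ[μ] V := by
    filter_upwards [hm] with ω hω
    rw [hVdef]; simp only; rw [hω]
  have hAeq : (fun ω => g (S ω) * (Y ω - μY) + h (S ω)) = fun ω => U ω + V ω := by
    funext ω; rw [hUdef, hVdef]; simp only; ring
  rw [hAeq, var_congr hUm, var_congr hVm]
  have hnn : 0 ≤ variance V μ := variance_nonneg V μ
  refine ⟨by linarith, hnn, by linarith⟩
end

section
/- Let Y be a {0,1}-valued random variable on a probability space with S a real-valued random variable, let m denote a version of the conditional expectation E[Y | σ(S)], and let g : ℝ → ℝ be a bounded measurable function. Then Var[ g(S)·(1 − Y) ] − Var[ g(S)·(Y − m) ] = Var[ g(S)·(1 − m) ] ≥ 0; in particular Var[ g(S)·(1 − Y) ] ≥ Var[ g(S)·(Y − m) ]. -/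
open MeasureTheory ProbabilityTheory

/-- Variance only depends on the a.e. equivalence class of the random variable. -/
lemma variance_congr_ae {Ω : Type*} [MeasurableSpace Ω] {μ : Measure Ω} {X X' : Ω → ℝ}
    (h : X =ᵐ[μ] X') : variance X μ = variance X' μ := by
  have hint : μ[X] = μ[X'] := integral_congr_ae h
  unfold ProbabilityTheory.variance ProbabilityTheory.evariance
  rw [hint]
  congr 1
  refine lintegral_congr_ae ?_
  filter_upwards [h] with ω hω
  rw [hω]

/-- **Corollary 2 (efficiency gain of the ssROC threshold estimator)**: for a binary
label `Y`, score `S`, a version `m` of `E[Y | σ(S)]`, and bounded measurable `g`,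
`Var[g(S)(1 − Y)] − Var[g(S)(Y − m)] = Var[g(S)(1 − m)] ≥ 0`; in particular
`Var[g(S)(1 − Y)] ≥ Var[g(S)(Y − m)]`. -/
theorem stmt_5 {Ω : Type*} [MeasurableSpace Ω] (μ : Measure Ω) [IsProbabilityMeasure μ]
    (Y S : Ω → ℝ) (hY : Measurable Y) (hS : Measurable S)
    (hY01 : ∀ ω, Y ω = 0 ∨ Y ω = 1)
    (m : Ω → ℝ)
    (hm : m =ᵐ[μ] μ[Y | MeasurableSpace.comap S inferInstance])
    (g : ℝ → ℝ) (hg : Measurable g)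
    (Cg : ℝ) (hgb : ∀ x, |g x| ≤ Cg) :
    (variance (fun ω => g (S ω) * (1 - Y ω)) μ
        - variance (fun ω => g (S ω) * (Y ω - m ω)) μ
      = variance (fun ω => g (S ω) * (1 - m ω)) μ)
    ∧ 0 ≤ variance (fun ω => g (S ω) * (1 - m ω)) μ
    ∧ variance (fun ω => g (S ω) * (Y ω - m ω)) μ
        ≤ variance (fun ω => g (S ω) * (1 - Y ω)) μ := by
  classical
  rename_i m0Ω hprob
  set mS : MeasurableSpace Ω := MeasurableSpace.comap S inferInstance with hmSdef
  letI hinst : MeasurableSpace Ω := m0Ω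
  have hle : mS ≤ m0Ω := hS.comap_le
  set m' : Ω → ℝ := μ[Y | mS] with hm'def
  -- basic bounds
  have hCg0 : 0 ≤ Cg := le_trans (abs_nonneg _) (hgb 0)
  have hYb : ∀ ω, 0 ≤ Y ω ∧ Y ω ≤ 1 := by
    intro ω; rcases hY01 ω with h | h <;> rw [h] <;> norm_num
  have hYabs : ∀ ω, |Y ω| ≤ 1 := by
    intro ω; rw [abs_le]; exact ⟨by linarith [(hYb ω).1], (hYb ω).2⟩
  have hYint : Integrable Y μ := by
    refine memLp_one_iff_integrable.mp (MemLp.of_bound hY.aestronglyMeasurable 1 ?_)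
    exact ae_of_all _ fun ω => by simpa [Real.norm_eq_abs] using hYabs ω
  -- bounds on the conditional expectation
  have hm'0 : 0 ≤ᵐ[μ] m' := condExp_nonneg (ae_of_all _ fun ω => (hYb ω).1)
  have hm'1 : m' ≤ᵐ[μ] fun _ => (1 : ℝ) := by
    have h1 : μ[(fun _ => (1 : ℝ)) | mS] = fun _ => (1 : ℝ) := condExp_const (μ := μ) hle (1 : ℝ)
    have := condExp_mono (μ := μ) (m := mS) hYint (integrable_const 1)
      (ae_of_all _ fun ω => (hYb ω).2)
    rwa [h1] at this
  have hm'bd : ∀ᵐ ω ∂μ, |m' ω| ≤ 1 := by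
    filter_upwards [hm'0, hm'1] with ω h0 h1
    simp only [Pi.zero_apply] at h0
    rw [abs_le]; exact ⟨by linarith, h1⟩
  -- measurability of the pieces
  have hSmS : Measurable[mS] S := Measurable.of_comap_le le_rfl
  have hGsm : StronglyMeasurable[mS] (fun ω => g (S ω)) :=
    (hg.comp hSmS).stronglyMeasurable
  have hGmeas : Measurable (fun ω => g (S ω)) := hg.comp hS
  have hm'sm : StronglyMeasurable[mS] m' := stronglyMeasurable_condExp
  have hm'meas : Measurable m' := (hm'sm.mono hle).measurable
  have hm'aesm : AEStronglyMeasurable m' μ := hm'meas.aestronglyMeasurable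
  -- generic integrability from a.e. bounds
  have bdd_memLp : ∀ (f : Ω → ℝ) (C : ℝ), AEStronglyMeasurable f μ →
      (∀ᵐ ω ∂μ, |f ω| ≤ C) → MemLp f 2 μ := by
    intro f C hf hb
    exact MemLp.of_bound hf C (by simpa [Real.norm_eq_abs] using hb)
  have bdd_int : ∀ (f : Ω → ℝ) (C : ℝ), AEStronglyMeasurable f μ →
      (∀ᵐ ω ∂μ, |f ω| ≤ C) → Integrable f μ := by
    intro f C hf hb
    exact memLp_one_iff_integrable.mp
      (MemLp.of_bound hf C (by simpa [Real.norm_eq_abs] using hb))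
  -- the key "pull-out" identity: for mS-strongly measurable h with h*Y integrable,
  -- ∫ h Y = ∫ h m'
  have key : ∀ (h : Ω → ℝ), StronglyMeasurable[mS] h → Integrable (h * Y) μ →
      ∫ ω, h ω * Y ω ∂μ = ∫ ω, h ω * m' ω ∂μ := by
    intro h hsm hint
    have hpull : μ[h * Y | mS] =ᵐ[μ] h * μ[Y | mS] :=
      condExp_mul_of_stronglyMeasurable_left hsm hint hYint
    calc ∫ ω, h ω * Y ω ∂μ = ∫ ω, (h * Y) ω ∂μ := rfl
      _ = ∫ ω, (μ[h * Y | mS]) ω ∂μ := (integral_condExp hle).symm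
      _ = ∫ ω, (h * μ[Y | mS]) ω ∂μ := integral_congr_ae hpull
      _ = ∫ ω, h ω * m' ω ∂μ := rfl
  -- the three centered functions (with m')
  set A : Ω → ℝ := fun ω => g (S ω) * (1 - m' ω) with hAdef
  set B : Ω → ℝ := fun ω => g (S ω) * (Y ω - m' ω) with hBdef
  have hAae : AEStronglyMeasurable A μ :=
    (hGmeas.mul (measurable_const.sub hm'meas)).aestronglyMeasurable
  have hBae : AEStronglyMeasurable B μ :=
    (hGmeas.mul (hY.sub hm'meas)).aestronglyMeasurable
  have hAbd : ∀ᵐ ω ∂μ, |A ω| ≤ Cg * 1 := by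
    filter_upwards [hm'0, hm'1] with ω h0 h1
    simp only [Pi.zero_apply] at h0
    rw [hAdef, abs_mul]
    exact mul_le_mul (hgb _) (by rw [abs_le]; constructor <;> [linarith; linarith])
      (abs_nonneg _) hCg0
  have hBbd : ∀ᵐ ω ∂μ, |B ω| ≤ Cg * 2 := by
    filter_upwards [hm'0, hm'1] with ω h0 h1
    simp only [Pi.zero_apply] at h0
    rw [hBdef, abs_mul]
    refine mul_le_mul (hgb _) ?_ (abs_nonneg _) hCg0
    rw [abs_le]; constructor
    · linarith [(hYb ω).1]
    · linarith [(hYb ω).2]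
  have hA2 : MemLp A 2 μ := bdd_memLp A (Cg * 1) hAae hAbd
  have hB2 : MemLp B 2 μ := bdd_memLp B (Cg * 2) hBae hBbd
  have hAint : Integrable A μ := bdd_int A (Cg * 1) hAae hAbd
  have hBint : Integrable B μ := bdd_int B (Cg * 2) hBae hBbd
  -- E[B] = 0
  have hEB : ∫ ω, B ω ∂μ = 0 := by
    have hGY : Integrable ((fun ω => g (S ω)) * Y) μ := by
      refine bdd_int _ (Cg * 1) ((hGmeas.mul hY).aestronglyMeasurable) ?_
      refine ae_of_all _ fun ω => ?_
      rw [Pi.mul_apply, abs_mul]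
      exact mul_le_mul (hgb _) (hYabs ω) (abs_nonneg _) hCg0
    have hGm : Integrable (fun ω => g (S ω) * m' ω) μ := by
      refine bdd_int _ (Cg * 1) ((hGmeas.mul hm'meas).aestronglyMeasurable) ?_
      filter_upwards [hm'bd] with ω hb
      rw [abs_mul]
      exact mul_le_mul (hgb _) hb (abs_nonneg _) hCg0
    have hGY' : Integrable (fun ω => g (S ω) * Y ω) μ := hGY
    have heq : ∫ ω, B ω ∂μ = ∫ ω, g (S ω) * Y ω ∂μ - ∫ ω, g (S ω) * m' ω ∂μ := by
      have e2 : ∫ ω, g (S ω) * Y ω - g (S ω) * m' ω ∂μ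
          = ∫ ω, g (S ω) * Y ω ∂μ - ∫ ω, g (S ω) * m' ω ∂μ := integral_sub hGY' hGm
      rw [← e2]
      refine integral_congr_ae (ae_of_all _ fun ω => ?_)
      simp only [hBdef]; ring
    rw [heq, key (fun ω => g (S ω)) hGsm hGY, sub_self]
  -- E[A * B] = 0
  have hEAB : ∫ ω, A ω * B ω ∂μ = 0 := by
    set h : Ω → ℝ := fun ω => g (S ω) ^ 2 * (1 - m' ω) with hhdef
    have hG2sm : StronglyMeasurable[mS] (fun ω => g (S ω) ^ 2) :=
      (((hg.pow_const 2).comp hSmS : Measurable[mS] (fun ω => g (S ω) ^ 2))).stronglyMeasurable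
    have hhsm : StronglyMeasurable[mS] h :=
      hG2sm.mul (stronglyMeasurable_const.sub hm'sm)
    have hhmeas : Measurable h :=
      (hGmeas.pow_const 2).mul (measurable_const.sub hm'meas)
    have hhae : AEStronglyMeasurable h μ := hhmeas.aestronglyMeasurable
    have hhbd : ∀ᵐ ω ∂μ, |h ω| ≤ Cg ^ 2 * 1 := by
      filter_upwards [hm'0, hm'1] with ω h0 h1
      simp only [Pi.zero_apply] at h0
      rw [hhdef, abs_mul, abs_pow]
      refine mul_le_mul (pow_le_pow_left₀ (abs_nonneg _) (hgb _) 2) ?_ (abs_nonneg _)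
        (by positivity)
      rw [abs_le]; constructor <;> linarith
    have hhY : Integrable (h * Y) μ := by
      refine bdd_int _ (Cg ^ 2 * 1) ((hhmeas.mul hY).aestronglyMeasurable) ?_
      filter_upwards [hhbd] with ω hb
      rw [Pi.mul_apply, abs_mul]
      calc |h ω| * |Y ω| ≤ (Cg ^ 2 * 1) * 1 :=
            mul_le_mul hb (hYabs ω) (abs_nonneg _) (by positivity)
        _ = Cg ^ 2 * 1 := by ring
    have hhm : Integrable (fun ω => h ω * m' ω) μ := by
      refine bdd_int _ (Cg ^ 2 * 1) ((hhmeas.mul hm'meas).aestronglyMeasurable) ?_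
      filter_upwards [hhbd, hm'bd] with ω hb hmb
      rw [abs_mul]
      calc |h ω| * |m' ω| ≤ (Cg ^ 2 * 1) * 1 :=
            mul_le_mul hb hmb (abs_nonneg _) (by positivity)
        _ = Cg ^ 2 * 1 := by ring
    have hhY' : Integrable (fun ω => h ω * Y ω) μ := hhY
    have heq : ∫ ω, A ω * B ω ∂μ = ∫ ω, h ω * Y ω ∂μ - ∫ ω, h ω * m' ω ∂μ := by
      have e2 : ∫ ω, h ω * Y ω - h ω * m' ω ∂μ
          = ∫ ω, h ω * Y ω ∂μ - ∫ ω, h ω * m' ω ∂μ := integral_sub hhY' hhm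
      rw [← e2]
      refine integral_congr_ae (ae_of_all _ fun ω => ?_)
      simp only [hAdef, hBdef, hhdef]; ring
    rw [heq, key h hhsm hhY, sub_self]
  -- A - B is the supervised influence function
  have hfun : (fun ω => g (S ω) * (1 - Y ω)) = fun ω => A ω - B ω := by
    funext ω; simp only [hAdef, hBdef]; ring
  -- squared-integrability of products
  have hABsub2 : MemLp (fun ω => A ω - B ω) 2 μ := hA2.sub hB2
  have hA2int : Integrable (fun ω => A ω ^ 2) μ := hA2.integrable_sq
  have hB2int : Integrable (fun ω => B ω ^ 2) μ := hB2.integrable_sq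
  have hABint : Integrable (fun ω => A ω * B ω) μ := by
    refine bdd_int _ ((Cg * 1) * (Cg * 2))
      (((hGmeas.mul (measurable_const.sub hm'meas)).mul
        (hGmeas.mul (hY.sub hm'meas))).aestronglyMeasurable) ?_
    filter_upwards [hAbd, hBbd] with ω ha hb
    rw [abs_mul]
    exact mul_le_mul ha hb (abs_nonneg _) (by positivity)
  -- variance computation
  have hVarAB : variance (fun ω => A ω - B ω) μ = variance A μ + variance B μ := by
    rw [variance_eq_sub hABsub2, variance_eq_sub hA2, variance_eq_sub hB2]
    have hsum : Integrable (fun ω => A ω ^ 2 + B ω ^ 2) μ := hA2int.add hB2int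
    have h2AB : Integrable (fun ω => 2 * (A ω * B ω)) μ := hABint.const_mul 2
    have hsq : ∫ ω, (A ω - B ω) ^ 2 ∂μ
        = ∫ ω, A ω ^ 2 ∂μ + ∫ ω, B ω ^ 2 ∂μ := by
      have e1 : ∫ ω, (A ω - B ω) ^ 2 ∂μ
          = ∫ ω, (A ω ^ 2 + B ω ^ 2) - 2 * (A ω * B ω) ∂μ :=
        integral_congr_ae (ae_of_all _ fun ω => by ring)
      have e2 : ∫ ω, (A ω ^ 2 + B ω ^ 2) - 2 * (A ω * B ω) ∂μ
          = (∫ ω, A ω ^ 2 + B ω ^ 2 ∂μ) - ∫ ω, 2 * (A ω * B ω) ∂μ :=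
        integral_sub hsum h2AB
      have e3 : ∫ ω, A ω ^ 2 + B ω ^ 2 ∂μ
          = (∫ ω, A ω ^ 2 ∂μ) + ∫ ω, B ω ^ 2 ∂μ := integral_add hA2int hB2int
      have e4 : ∫ ω, 2 * (A ω * B ω) ∂μ = 2 * ∫ ω, A ω * B ω ∂μ :=
        integral_const_mul 2 _
      rw [e1, e2, e3, e4, hEAB]
      ring
    have hmean : ∫ ω, A ω - B ω ∂μ = ∫ ω, A ω ∂μ := by
      have e5 : ∫ ω, A ω - B ω ∂μ = (∫ ω, A ω ∂μ) - ∫ ω, B ω ∂μ :=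
        integral_sub hAint hBint
      rw [e5, hEB, sub_zero]
    simp only [Pi.pow_apply] at hsq ⊢
    rw [hsq, hmean, hEB]
    ring
  -- transfer from m' back to m
  have hmB : variance (fun ω => g (S ω) * (Y ω - m ω)) μ = variance B μ := by
    refine variance_congr_ae ?_
    filter_upwards [hm] with ω hω
    rw [hBdef, hω]
  have hmA : variance (fun ω => g (S ω) * (1 - m ω)) μ = variance A μ := by
    refine variance_congr_ae ?_
    filter_upwards [hm] with ω hω
    rw [hAdef, hω]
  rw [hfun, hmA, hmB, hVarAB]
  refine ⟨by ring, variance_nonneg _ _, ?_⟩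
  have := variance_nonneg A μ
  linarith
end
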